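/- For s ∈ (0, π̂/2), the function G_2(s) = (1 + |tan_p s|^p)(s(2 + (1-p)|tan_p s|^p - p·s·|tan_p s|^{p-1}) - tan_p s) - tan_p s is strictly negative. -/

import Mathlib

open Real

noncomputable def plPow (p u : ℝ) : ℝ := |u| ^ (p - 2) * u

lemma plPow_zero (p : ℝ) : plPow p 0 = 0 := by simp [plPow]

lemma plPow_one (p : ℝ) : plPow p 1 = 1 := by simp [plPow]

lemma abs_plPow (p u : ℝ) (hp : 1 < p) : |plPow p u| = |u| ^ (p - 1) := by
  rcases eq_or_ne u 0 with rfl | hu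
  · simp [plPow, Real.zero_rpow (by linarith : p - 1 ≠ 0)]
  · have h : (0:ℝ) < |u| := abs_pos.2 hu
    rw [plPow, abs_mul, abs_rpow_of_nonneg (abs_nonneg u), abs_abs,
      show p - 1 = (p - 2) + 1 by ring, Real.rpow_add h, Real.rpow_one]

lemma plPow_pos {p u : ℝ} (hu : 0 < u) : 0 < plPow p u := by
  have := Real.rpow_pos_of_pos (abs_pos.2 hu.ne') (p - 2)
  exact mul_pos this hu

lemma plPow_pos_iff {p u : ℝ} : 0 < plPow p u ↔ 0 < u := by
  constructor
  · intro h
    rcases lt_trichotomy u 0 with h1 | rfl | h1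
    · have : plPow p u < 0 := mul_neg_of_pos_of_neg (Real.rpow_pos_of_pos (abs_pos.2 h1.ne) _) h1
      linarith
    · simp [plPow_zero] at h
    · exact h1
  · exact plPow_pos

lemma plPow_eq_zero_iff {p u : ℝ} : plPow p u = 0 ↔ u = 0 := by
  constructor
  · intro h
    by_contra hu
    have := Real.rpow_pos_of_pos (abs_pos.2 hu) (p - 2)
    rcases (mul_eq_zero.1 h) with h1 | h1
    · linarith
    · exact hu h1
  · rintro rfl; exact plPow_zero p

lemma plPow_of_pos {p u : ℝ} (hu : 0 < u) : plPow p u = u ^ (p - 1) := by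
  rw [plPow, abs_of_pos hu, show p - 1 = (p - 2) + 1 by ring, Real.rpow_add hu, Real.rpow_one]

lemma plPow_plPow {p : ℝ} (u : ℝ) (hp : 1 < p) : plPow (p / (p - 1)) (plPow p u) = u := by
  rcases eq_or_ne u 0 with rfl | hu
  · simp [plPow_zero]
  · have hp1 : (0:ℝ) < p - 1 := by linarith
    have h : (0:ℝ) < |u| := abs_pos.2 hu
    rw [plPow, abs_plPow p u hp, plPow, ← Real.rpow_mul (abs_nonneg u),
      ← mul_assoc, ← Real.rpow_add h]
    have : (p - 1) * (p / (p - 1) - 2) + (p - 2) = 0 := by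
      field_simp
      ring
    rw [this, Real.rpow_zero, one_mul]

lemma continuous_plPow {p : ℝ} (hp : 1 < p) : Continuous (plPow p) := by
  rw [continuous_iff_continuousAt]
  intro x
  rcases eq_or_ne x 0 with rfl | hx
  · rw [ContinuousAt, plPow_zero]
    apply squeeze_zero_norm (a := fun u : ℝ => |u| ^ (p - 1))
    · intro t; rw [Real.norm_eq_abs, abs_plPow p t hp]
    · have h1 : ContinuousAt (fun y : ℝ => y ^ (p - 1)) |(0:ℝ)| := by
        apply Real.continuousAt_rpow_const
        right; linarith
      have h2 := h1.comp (continuous_abs.continuousAt (x := (0:ℝ)))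
      unfold ContinuousAt at h2
      simpa [Function.comp_def, Real.zero_rpow (by linarith : p - 1 ≠ 0)] using h2
  · apply ContinuousAt.mul ?_ continuousAt_id
    have h1 : ContinuousAt (fun y : ℝ => y ^ (p - 2)) |x| :=
      Real.continuousAt_rpow_const _ _ (Or.inl (abs_ne_zero.2 hx))
    exact h1.comp (continuous_abs.continuousAt)


lemma hasDerivAt_abs_rpow' {p : ℝ} (hp : 1 < p) (x : ℝ) :
    HasDerivAt (fun u : ℝ => |u| ^ p) (p * plPow p x) x := by
  have := hasDerivAt_abs_rpow x hp
  rw [plPow, ← mul_assoc]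
  exact this

lemma energy {p : ℝ} (hp : 1 < p) (S S' : ℝ → ℝ)
    (hd : ∀ x, HasDerivAt S (S' x) x)
    (hode : ∀ x, HasDerivAt (fun s => plPow p (S' s)) (-(p - 1) * plPow p (S x)) x)
    (h0 : S 0 = 0) (h0' : S' 0 = 1) :
    ∀ x, |S x| ^ p + |S' x| ^ p = 1 := by
  set q : ℝ := p / (p - 1) with hq_def
  have hp1 : (0:ℝ) < p - 1 := by linarith
  have hq : 1 < q := by
    rw [hq_def, lt_div_iff₀ hp1]; linarith
  have hqp : q * (p - 1) = p := by
    rw [hq_def]; field_simp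
  set V : ℝ → ℝ := fun s => plPow p (S' s) with hV
  set E : ℝ → ℝ := fun s => |S s| ^ p + |V s| ^ q with hE
  have habs : ∀ x, |V x| ^ q = |S' x| ^ p := by
    intro x
    rw [hV, abs_plPow p _ hp, ← Real.rpow_mul (abs_nonneg _)]
    rw [mul_comm (p-1) q, hqp]
  have hders : ∀ x, HasDerivAt E 0 x := by
    intro x
    have h1 : HasDerivAt (fun s => |S s| ^ p) (p * plPow p (S x) * S' x) x :=
      (hasDerivAt_abs_rpow' hp (S x)).comp x (hd x)
    have h2 : HasDerivAt (fun s => |V s| ^ q)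
        (q * plPow q (V x) * (-(p - 1) * plPow p (S x))) x :=
      (hasDerivAt_abs_rpow' hq (V x)).comp x (hode x)
    have h3 : plPow q (V x) = S' x := plPow_plPow (S' x) hp
    have h4 := h1.add h2
    rw [h3] at h4
    have heq : p * plPow p (S x) * S' x + q * S' x * (-(p - 1) * plPow p (S x)) = 0 := by
      rw [hq_def]; field_simp; ring
    rwa [heq] at h4
  have hconst : ∀ x, E x = E 0 :=
    fun x => is_const_of_deriv_eq_zero (fun y => (hders y).differentiableAt)
      (fun y => (hders y).deriv) x 0
  intro x
  have h1 : |S x| ^ p + |V x| ^ q = |S 0| ^ p + |V 0| ^ q := hconst x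
  rw [habs x, habs 0, h0, h0'] at h1
  simpa [Real.zero_rpow (by linarith : p ≠ 0)] using h1

noncomputable def pihat (p : ℝ) : ℝ := 2 * ∫ t in (0:ℝ)..1, (1 - t ^ p) ^ (-(1 / p))

lemma g_integrable {p : ℝ} (hp : 1 < p) :
    IntervalIntegrable (fun u : ℝ => (1 - u ^ p) ^ (-(1 / p))) MeasureTheory.volume 0 1 := by
  have hp0 : (0:ℝ) < p := by linarith
  have hr : (-1:ℝ) < -(1/p) := by
    have : 1/p < 1 := by rw [div_lt_one hp0]; linarith
    linarith
  have hmaj0 : IntervalIntegrable (fun x : ℝ => x ^ (-(1/p))) MeasureTheory.volume 0 1 :=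
    intervalIntegral.intervalIntegrable_rpow' hr
  have hmaj : IntervalIntegrable (fun x : ℝ => (1 - x) ^ (-(1/p))) MeasureTheory.volume 0 1 := by
    have := (hmaj0.comp_sub_left 1).symm
    simpa using this
  apply hmaj.mono_fun
  · apply Measurable.aestronglyMeasurable
    measurability
  · rw [Filter.EventuallyLE, MeasureTheory.ae_restrict_iff' measurableSet_uIoc]
    apply Filter.Eventually.of_forall
    intro u hu
    rw [Set.uIoc_of_le (by norm_num : (0:ℝ) ≤ 1)] at hu
    obtain ⟨hu0, hu1⟩ := hu
    have hunn : (0:ℝ) ≤ u := le_of_lt hu0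
    have hup_le : u ^ p ≤ u := by
      calc u ^ p ≤ u ^ (1:ℝ) := Real.rpow_le_rpow_of_exponent_ge hu0 hu1 (by linarith)
      _ = u := Real.rpow_one u
    have h1 : (0:ℝ) ≤ 1 - u ^ p := by
      have : u ^ p ≤ 1 := le_trans hup_le hu1
      linarith
    have h2 : (0:ℝ) ≤ 1 - u := by linarith
    simp only [Real.norm_eq_abs, abs_of_nonneg (Real.rpow_nonneg h1 _),
      abs_of_nonneg (Real.rpow_nonneg h2 _)]
    have hppos : (0:ℝ) < 1/p := by positivity
    rcases eq_or_lt_of_le hu1 with rfl | hu1'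
    · simp [Real.one_rpow, Real.zero_rpow (show -(1/p) ≠ 0 by linarith)]
    · exact Real.rpow_le_rpow_of_nonpos (by linarith) (by linarith) (by linarith)

lemma Sprime_pos {p : ℝ} (hp : 1 < p) (S S' : ℝ → ℝ)
    (hd : ∀ x, HasDerivAt S (S' x) x)
    (hode : ∀ x, HasDerivAt (fun s => plPow p (S' s)) (-(p - 1) * plPow p (S x)) x)
    (h0 : S 0 = 0) (h0' : S' 0 = 1)
    (hpos : ∀ x ∈ Set.Ioo 0 (pihat p), 0 < S x) :
    ∀ x, 0 ≤ x → x < pihat p / 2 → 0 < S' x := by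
  have hp0 : (0:ℝ) < p := by linarith
  have hp1 : (0:ℝ) < p - 1 := by linarith
  have hq : 1 < p / (p - 1) := by rw [lt_div_iff₀ hp1]; linarith
  set q : ℝ := p / (p - 1) with hq_def
  set V : ℝ → ℝ := fun s => plPow p (S' s) with hV_def
  have hVd : ∀ x, HasDerivAt V (-(p - 1) * plPow p (S x)) x := hode
  have hVcont : Continuous V := by
    rw [continuous_iff_continuousAt]; exact fun x => (hVd x).continuousAt
  have hS'V : ∀ x, plPow q (V x) = S' x := fun x => plPow_plPow (S' x) hp
  have hS'cont : Continuous S' := by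
    have : Continuous (fun x => plPow q (V x)) := (continuous_plPow hq).comp hVcont
    simpa [funext hS'V] using this
  have henergy := energy hp S S' hd hode h0 h0'
  intro x hx0 hxlt
  by_contra hcon
  have hVx : V x ≤ 0 := by
    rcases le_or_gt (S' x) 0 with h | h
    · by_contra h2
      exact h.not_gt (plPow_pos_iff.1 (lt_of_not_ge h2))
    · exact absurd h hcon
  have hV0 : V 0 = 1 := by rw [hV_def]; simp [h0', plPow_one]
  have hxne : x ≠ 0 := by
    intro h; rw [h, hV0] at hVx; linarith
  have hx0' : 0 < x := lt_of_le_of_ne hx0 (Ne.symm hxne)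
  have hpihat : 0 < pihat p := by linarith [hxlt, hx0']
  -- the set of points in [0, x] where V ≤ 0
  set A : Set ℝ := {y | y ∈ Set.Icc 0 x ∧ V y ≤ 0} with hA_def
  have hA_closed : IsClosed A := by
    have : A = Set.Icc 0 x ∩ V ⁻¹' (Set.Iic 0) := rfl
    rw [this]
    exact isClosed_Icc.inter (isClosed_Iic.preimage hVcont)
  have hA_ne : A.Nonempty := ⟨x, ⟨⟨hx0, le_refl x⟩, hVx⟩⟩
  have hA_bdd : BddBelow A := ⟨0, fun y hy => hy.1.1⟩
  set z : ℝ := sInf A with hz_def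
  have hzA : z ∈ A := hA_closed.csInf_mem hA_ne hA_bdd
  have hz0 : 0 ≤ z := hzA.1.1
  have hzx : z ≤ x := hzA.1.2
  have hbefore : ∀ y, 0 ≤ y → y < z → 0 < V y := by
    intro y hy0 hyz
    by_contra h
    have : y ∈ A := ⟨⟨hy0, le_trans (le_of_lt hyz) hzx⟩, le_of_not_gt h⟩
    exact absurd (csInf_le hA_bdd this) (not_le.2 hyz)
  have hzpos : 0 < z := by
    rcases eq_or_lt_of_le hz0 with h | h
    · exfalso
      have h2 : V z ≤ 0 := hzA.2
      rw [← h, hV0] at h2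
      linarith
    · exact h
  have hVz : V z = 0 := by
    refine le_antisymm hzA.2 ?_
    have htend : Filter.Tendsto V (nhdsWithin z (Set.Iio z)) (nhds (V z)) :=
      hVcont.continuousAt.continuousWithinAt
    apply ge_of_tendsto htend
    filter_upwards [Ioo_mem_nhdsLT_of_mem (⟨hzpos, le_refl z⟩ : z ∈ Set.Ioc 0 z)] with y hy
    exact (hbefore y hy.1.le hy.2).le
  have hS'z : S' z = 0 := plPow_eq_zero_iff.1 hVz
  have hzlt : z < pihat p := by linarith [hxlt, hzx, hpihat]
  have hSz_pos : 0 < S z := hpos z ⟨hzpos, hzlt⟩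
  have hSz : S z = 1 := by
    have he := henergy z
    rw [hS'z, abs_zero, Real.zero_rpow (by linarith : p ≠ 0), add_zero,
      abs_of_pos hSz_pos] at he
    rw [← Real.rpow_rpow_inv hSz_pos.le (by linarith : p ≠ 0), he, Real.one_rpow]
  have hS'before : ∀ y, 0 ≤ y → y < z → 0 < S' y :=
    fun y h1 h2 => plPow_pos_iff.1 (hbefore y h1 h2)
  have hmono : StrictMonoOn S (Set.Icc 0 z) := by
    apply strictMonoOn_of_deriv_pos (convex_Icc 0 z)
    · exact fun y _ => (hd y).continuousAt.continuousWithinAt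
    · intro y hy
      rw [interior_Icc] at hy
      rw [(hd y).deriv]
      exact hS'before y hy.1.le hy.2
  have hSnn : ∀ b, 0 ≤ b → b ≤ z → 0 ≤ S b := by
    intro b hb0 hbz
    rcases eq_or_lt_of_le hb0 with h | h
    · rw [← h, h0]
    · exact (hpos b ⟨h, lt_of_le_of_lt hbz hzlt⟩).le
  have hSlt1 : ∀ b, 0 ≤ b → b < z → S b < 1 := by
    intro b hb0 hbz
    have := hmono (Set.mem_Icc.2 ⟨hb0, hbz.le⟩) (Set.mem_Icc.2 ⟨hz0, le_refl z⟩) hbz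
    rwa [hSz] at this
  -- substitution identity
  set g : ℝ → ℝ := fun u => (1 - u ^ p) ^ (-(1 / p)) with hg_def
  have hkey : ∀ b ∈ Set.Ioo 0 z, (∫ u in (0:ℝ)..(S b), g u) = b := by
    intro b hb
    obtain ⟨hb0, hbz⟩ := hb
    have huIcc : Set.uIcc 0 b = Set.Icc 0 b := Set.uIcc_of_le hb0.le
    have hsub := intervalIntegral.integral_comp_smul_deriv'
      (f := S) (f' := S') (g := g) (a := 0) (b := b)
      (fun y _ => hd y) (hS'cont.continuousOn) ?cont
    case cont =>
      intro u hu
      obtain ⟨y, hy, rfl⟩ := hu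
      rw [huIcc] at hy
      have hy0 : 0 ≤ y := hy.1
      have hyz : y < z := lt_of_le_of_lt hy.2 hbz
      have hSy0 : 0 ≤ S y := hSnn y hy0 hyz.le
      have hSy1 : S y < 1 := hSlt1 y hy0 hyz
      have hbase : 0 < 1 - (S y) ^ p := by
        have : (S y) ^ p < 1 := Real.rpow_lt_one hSy0 hSy1 hp0
        linarith
      apply ContinuousAt.continuousWithinAt
      apply ContinuousAt.rpow_const
      · exact continuousAt_const.sub (Real.continuousAt_rpow_const _ _ (Or.inr hp0.le))
      · exact Or.inl (by linarith)
    rw [h0] at hsub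
    rw [← hsub]
    have hcongr : ∀ y ∈ Set.uIcc 0 b, S' y • (g ∘ S) y = 1 := by
      intro y hy
      rw [huIcc] at hy
      have hy0 : 0 ≤ y := hy.1
      have hyz : y < z := lt_of_le_of_lt hy.2 hbz
      have hS'y : 0 < S' y := hS'before y hy0 hyz
      have hSy0 : 0 ≤ S y := hSnn y hy0 hyz.le
      have he := henergy y
      rw [abs_of_nonneg hSy0, abs_of_pos hS'y] at he
      have h1 : 1 - (S y) ^ p = (S' y) ^ p := by linarith
      show S' y • g (S y) = 1
      rw [smul_eq_mul, hg_def]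
      simp only
      rw [h1, one_div, Real.rpow_neg (Real.rpow_nonneg hS'y.le p),
        Real.rpow_rpow_inv hS'y.le (by linarith : p ≠ 0), mul_inv_cancel₀ hS'y.ne']
    rw [intervalIntegral.integral_congr hcongr]
    simp
  set F : ℝ → ℝ := fun r => ∫ u in (0:ℝ)..r, g u with hF_def
  have hInt : MeasureTheory.IntegrableOn g (Set.uIcc 0 1) MeasureTheory.volume := by
    rw [Set.uIcc_of_le (by norm_num : (0:ℝ) ≤ 1),
      integrableOn_Icc_iff_integrableOn_Ioc]
    exact (g_integrable hp).1
  have hFcont : ContinuousOn F (Set.Icc 0 1) := by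
    have := intervalIntegral.continuousOn_primitive_interval hInt
    rwa [Set.uIcc_of_le (by norm_num : (0:ℝ) ≤ 1)] at this
  have hStend : Filter.Tendsto S (nhdsWithin z (Set.Iio z)) (nhdsWithin 1 (Set.Icc 0 1)) := by
    rw [tendsto_nhdsWithin_iff]
    constructor
    · have h := (hd z).continuousAt.tendsto
      rw [hSz] at h
      exact h.mono_left nhdsWithin_le_nhds
    · filter_upwards [Ioo_mem_nhdsLT_of_mem (⟨hzpos, le_refl z⟩ : z ∈ Set.Ioc 0 z)] with y hy
      exact ⟨hSnn y hy.1.le hy.2.le, (hSlt1 y hy.1.le hy.2).le⟩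
  have h1 : Filter.Tendsto (fun b => F (S b)) (nhdsWithin z (Set.Iio z)) (nhds (F 1)) :=
    ((hFcont 1 (by norm_num)).tendsto).comp hStend
  have h2 : Filter.Tendsto (fun b => F (S b)) (nhdsWithin z (Set.Iio z)) (nhds z) := by
    have hid : Filter.Tendsto (fun b : ℝ => b) (nhdsWithin z (Set.Iio z)) (nhds z) :=
      Filter.tendsto_id.mono_right nhdsWithin_le_nhds
    apply hid.congr'
    filter_upwards [Ioo_mem_nhdsLT_of_mem (⟨hzpos, le_refl z⟩ : z ∈ Set.Ioc 0 z)] with b hb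
    exact (hkey b hb).symm
  have hFz : F 1 = z := tendsto_nhds_unique h1 h2
  have hFhalf : F 1 = pihat p / 2 := by
    rw [hF_def, pihat]
    ring
  rw [hFhalf] at hFz
  linarith

lemma plPow_mul_self {p : ℝ} (hp : 1 < p) (u : ℝ) : plPow p u * u = |u| ^ p := by
  rcases eq_or_ne u 0 with rfl | hu
  · simp [plPow_zero, Real.zero_rpow (by linarith : p ≠ 0)]
  · have h : (0:ℝ) < |u| := abs_pos.2 hu
    rw [plPow, mul_assoc,
      show u * u = |u| ^ (2:ℝ) by
        rw [show (2:ℝ) = ((2:ℕ):ℝ) by norm_num, Real.rpow_natCast, sq_abs]; ring,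
      ← Real.rpow_add h]
    norm_num

lemma tan_deriv {p : ℝ} (hp : 1 < p) (S S' : ℝ → ℝ)
    (hd : ∀ x, HasDerivAt S (S' x) x)
    (hode : ∀ x, HasDerivAt (fun s => plPow p (S' s)) (-(p - 1) * plPow p (S x)) x)
    (y : ℝ) (hB : 0 < S' y) (hA : 0 ≤ S y) :
    HasDerivAt (fun w => S w / S' w) (1 + |S y / S' y| ^ p) y := by
  have hp1 : (0:ℝ) < p - 1 := by linarith
  have hq : 1 < p / (p - 1) := by rw [lt_div_iff₀ hp1]; linarith
  set q : ℝ := p / (p - 1) with hq_def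
  set V : ℝ → ℝ := fun s => plPow p (S' s) with hV_def
  have hVy : V y = (S' y) ^ (p - 1) := plPow_of_pos hB
  have hVypos : 0 < V y := plPow_pos hB
  -- derivative of plPow q at V y
  have e1 : HasDerivAt (fun v : ℝ => v ^ (q - 1)) ((q - 1) * (V y) ^ (q - 2)) (V y) := by
    have := Real.hasDerivAt_rpow_const (x := V y) (p := q - 1) (Or.inl hVypos.ne')
    convert this using 2
    ring
  have e2 : HasDerivAt (plPow q) ((q - 1) * (V y) ^ (q - 2)) (V y) := by
    apply e1.congr_of_eventuallyEq
    filter_upwards [Ioi_mem_nhds hVypos] with v hv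
    exact plPow_of_pos hv
  have e3 : HasDerivAt (fun w => plPow q (V w))
      ((q - 1) * (V y) ^ (q - 2) * (-(p - 1) * plPow p (S y))) y :=
    e2.comp y (hode y)
  have hS'fun : (fun w => plPow q (V w)) = S' := funext fun w => plPow_plPow (S' w) hp
  rw [hS'fun] at e3
  -- now T = S / S'
  have hTd := (hd y).div e3 hB.ne'
  refine hTd.congr_deriv (Eq.symm ?_)
  -- algebra
  set A := S y
  set B := S' y
  set D := (q - 1) * (V y) ^ (q - 2) * (-(p - 1) * plPow p A) with hD_def
  have hq2 : (p - 1) * (q - 2) = 2 - p := by rw [hq_def]; field_simp; ring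
  have hq1 : (q - 1) * (p - 1) = 1 := by rw [hq_def]; field_simp; ring
  have h5 : (V y) ^ (q - 2) = B ^ (2 - p) := by
    rw [hVy, ← Real.rpow_mul hB.le, hq2]
  have h6 : A * D = -(B ^ (2 - p) * |A| ^ p) := by
    have hm := plPow_mul_self hp A
    calc A * D = -((q - 1) * (p - 1)) * ((V y) ^ (q - 2) * (plPow p A * A)) := by
          rw [hD_def]; ring
    _ = -(B ^ (2 - p) * |A| ^ p) := by rw [hq1, h5, hm]; ring
  have h7 : |A / B| ^ p = |A| ^ p / B ^ p := by
    rw [abs_div, abs_of_pos hB, Real.div_rpow (abs_nonneg A) hB.le]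
  have h8 : B ^ (2 - p : ℝ) = B ^ 2 / B ^ p := by
    rw [Real.rpow_sub hB, show ((2:ℝ)) = ((2:ℕ):ℝ) by norm_num, Real.rpow_natCast]
  have hBp : (0:ℝ) < B ^ p := Real.rpow_pos_of_pos hB p
  rw [h7]
  rw [show (B * B - A * D) / B ^ 2 = (B * B - A * D) / B ^ 2 from rfl]
  rw [h6, h8]
  field_simp
  ring

/-- for `s ∈ (0, π̂/2)`, with `tan_p = S_p/S_p'`,
`G₂(s) = (1+|tan_p s|^p)(s(2+(1-p)|tan_p s|^p - p s |tan_p s|^{p-1}) - tan_p s) - tan_p s < 0`. -/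
theorem G2_neg (p : ℝ) (hp : 1 < p) (S S' : ℝ → ℝ)
    (hd : ∀ x, HasDerivAt S (S' x) x)
    (hode : ∀ x, HasDerivAt (fun s => plPow p (S' s)) (-(p - 1) * plPow p (S x)) x)
    (h0 : S 0 = 0) (h0' : S' 0 = 1)
    (hpos : ∀ x ∈ Set.Ioo 0 (pihat p), 0 < S x) (hz : S (pihat p) = 0) :
    ∀ s ∈ Set.Ioo 0 (pihat p / 2),
      (1 + |S s / S' s| ^ p) *
          (s * (2 + (1 - p) * |S s / S' s| ^ p - p * s * |S s / S' s| ^ (p - 1)) -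
            S s / S' s) -
        S s / S' s < 0 := by
  intro s hs
  obtain ⟨hs0, hs2⟩ := hs
  have hp0 : (0:ℝ) < p := by linarith
  have hp1' : (0:ℝ) < p - 1 := by linarith
  have hpihat : 0 < pihat p := by linarith
  have hS'pos : ∀ y, 0 ≤ y → y ≤ s → 0 < S' y := fun y hy0 hys =>
    Sprime_pos hp S S' hd hode h0 h0' hpos y hy0 (lt_of_le_of_lt hys hs2)
  have hSnn : ∀ y, 0 ≤ y → y ≤ s → 0 ≤ S y := by
    intro y hy0 hys
    rcases eq_or_lt_of_le hy0 with h | h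
    · rw [← h, h0]
    · exact (hpos y ⟨h, by linarith⟩).le
  have hSpos : ∀ y, 0 < y → y ≤ s → 0 < S y := fun y hy0 hys =>
    hpos y ⟨hy0, by linarith⟩
  set T : ℝ → ℝ := fun w => S w / S' w with hT_def
  have hT : ∀ y, 0 ≤ y → y ≤ s → HasDerivAt T (1 + |T y| ^ p) y := fun y hy0 hys =>
    tan_deriv hp S S' hd hode y (hS'pos y hy0 hys) (hSnn y hy0 hys)
  have hT0 : T 0 = 0 := by rw [hT_def]; simp [h0]
  have hTpos : ∀ y, 0 < y → y ≤ s → 0 < T y := fun y hy0 hys =>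
    div_pos (hSpos y hy0 hys) (hS'pos y hy0.le hys)
  -- step 1 : s < T s
  have hst : s < T s := by
    set Ψ : ℝ → ℝ := fun w => T w - w with hΨ_def
    have hmono : StrictMonoOn Ψ (Set.Icc 0 s) := by
      apply strictMonoOn_of_deriv_pos (convex_Icc 0 s)
      · intro y hy
        have hΨd : HasDerivAt Ψ (1 + |T y| ^ p - 1) y :=
          HasDerivAt.sub (hT y hy.1 hy.2) (hasDerivAt_id y)
        exact hΨd.continuousAt.continuousWithinAt
      · intro y hy
        rw [interior_Icc] at hy
        have hΨd : HasDerivAt Ψ (1 + |T y| ^ p - 1) y :=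
          HasDerivAt.sub (hT y hy.1.le hy.2.le) (hasDerivAt_id y)
        rw [hΨd.deriv]
        have h1 := hTpos y hy.1 hy.2.le
        have h2 : (0:ℝ) < |T y| ^ p := Real.rpow_pos_of_pos (abs_pos.2 h1.ne') p
        linarith
    have hm := hmono (Set.mem_Icc.2 ⟨le_refl 0, hs0.le⟩) (Set.mem_Icc.2 ⟨hs0.le, le_refl s⟩) hs0
    have : Ψ 0 = 0 := by rw [hΨ_def]; simp [hT0]
    rw [this] at hm
    have : Ψ s = T s - s := rfl
    rw [this] at hm
    linarith
  -- step 2 : the phi inequality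
  have hφ : 0 < p * s * (1 + |T s| ^ p) - (2 - p) * T s - (1 - p) * (T s * |T s| ^ p) := by
    set Φ : ℝ → ℝ := fun w => p * w * (1 + |T w| ^ p) - (2 - p) * T w - (1 - p) * (T w * |T w| ^ p)
      with hΦ_def
    have hder : ∀ y, 0 ≤ y → y ≤ s → HasDerivAt Φ
        (p * (1 + |T y| ^ p) + p * y * (p * plPow p (T y) * (1 + |T y| ^ p))
          - (2 - p) * (1 + |T y| ^ p)
          - (1 - p) * ((1 + |T y| ^ p) * |T y| ^ p + T y * (p * plPow p (T y) * (1 + |T y| ^ p)))) y := by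
      intro y hy0 hys
      have hTy := hT y hy0 hys
      have habs : HasDerivAt (fun w => |T w| ^ p) (p * plPow p (T y) * (1 + |T y| ^ p)) y :=
        (hasDerivAt_abs_rpow' hp (T y)).comp y hTy
      have c1 : HasDerivAt (fun w : ℝ => p * w) p y := by
        simpa using (hasDerivAt_id y).const_mul p
      have c2 : HasDerivAt (fun w => 1 + |T w| ^ p) (p * plPow p (T y) * (1 + |T y| ^ p)) y :=
        habs.const_add 1
      have c3 := c1.mul c2
      have c4 := hTy.const_mul (2 - p)
      have c5 := (hTy.mul habs).const_mul (1 - p)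
      exact (c3.sub c4).sub c5
    have hmono : StrictMonoOn Φ (Set.Icc 0 s) := by
      apply strictMonoOn_of_deriv_pos (convex_Icc 0 s)
      · intro y hy
        exact (hder y hy.1 hy.2).continuousAt.continuousWithinAt
      · intro y hy
        rw [interior_Icc] at hy
        rw [(hder y hy.1.le hy.2.le).deriv]
        have hTy := hTpos y hy.1 hy.2.le
        have hk : 0 < plPow p (T y) := plPow_pos hTy
        have hm : 0 < |T y| ^ p := Real.rpow_pos_of_pos (abs_pos.2 hTy.ne') p
        have hTk : T y * plPow p (T y) = |T y| ^ p := by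
          rw [mul_comm]; exact plPow_mul_self hp (T y)
        have hgoal_eq : p * (1 + |T y| ^ p) + p * y * (p * plPow p (T y) * (1 + |T y| ^ p))
            - (2 - p) * (1 + |T y| ^ p)
            - (1 - p) * ((1 + |T y| ^ p) * |T y| ^ p + T y * (p * plPow p (T y) * (1 + |T y| ^ p)))
            = (1 + |T y| ^ p) * ((2*p - 2) + p^2 * (y * plPow p (T y)) + (p^2 - 1) * |T y| ^ p)
              + (p - 1) * p * (1 + |T y| ^ p) * (T y * plPow p (T y) - |T y| ^ p) := by
          ring
        have hTk0 : T y * plPow p (T y) - |T y| ^ p = 0 := by rw [hTk]; ring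
        have hbr : 0 < (2*p - 2) + p^2 * (y * plPow p (T y)) + (p^2 - 1) * |T y| ^ p := by
          have t1 : 0 < p^2 * (y * plPow p (T y)) := mul_pos (pow_pos hp0 2) (mul_pos hy.1 hk)
          have hp2 : (0:ℝ) < p^2 - 1 := by nlinarith [mul_pos hp1' (show (0:ℝ) < p + 1 by linarith)]
          have t2 : 0 < (p^2 - 1) * |T y| ^ p := mul_pos hp2 hm
          linarith
        have hfinal : 0 < (1 + |T y| ^ p) * ((2*p - 2) + p^2 * (y * plPow p (T y)) + (p^2 - 1) * |T y| ^ p) :=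
          mul_pos (by linarith) hbr
        rw [hgoal_eq, hTk0]
        linarith [hfinal]
    have hΦ0 : Φ 0 = 0 := by
      rw [hΦ_def]
      simp [hT0, Real.zero_rpow (by linarith : p ≠ 0)]
    have h2 := hmono (Set.mem_Icc.2 ⟨le_refl 0, hs0.le⟩) (Set.mem_Icc.2 ⟨hs0.le, le_refl s⟩) hs0
    rw [hΦ0] at h2
    have : Φ s = p * s * (1 + |T s| ^ p) - (2 - p) * T s - (1 - p) * (T s * |T s| ^ p) := rfl
    rw [this] at h2
    linarith
  -- final algebra
  have hts : S s / S' s = T s := rfl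
  rw [hts]
  have htpos : 0 < T s := hTpos s hs0 (le_refl s)
  rw [abs_of_pos htpos] at hφ ⊢
  set t : ℝ := T s with ht_def
  set Tt : ℝ := t ^ p with hTt_def
  set R : ℝ := t ^ (p - 1) with hR_def
  have hm : 0 < Tt := Real.rpow_pos_of_pos htpos p
  have hRpos : 0 < R := Real.rpow_pos_of_pos htpos (p - 1)
  have hRt : R * t = Tt := by
    rw [hR_def, hTt_def, show p = (p - 1) + 1 by ring, Real.rpow_add htpos, Real.rpow_one]
    norm_num
  have e1 : 0 < R * (p * s * (1 + Tt) - (2 - p) * t - (1 - p) * (t * Tt)) := mul_pos hRpos hφ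
  have e2 : R * (p * s * (1 + Tt) - (2 - p) * t - (1 - p) * (t * Tt))
      = p * s * R * (1 + Tt) - (2 - p) * (R * t) - (1 - p) * ((R * t) * Tt) := by ring
  rw [e2, hRt] at e1
  have claimA : (2 + (1 - p) * Tt - p * s * R) * (1 + Tt) < 2 + Tt := by
    have hre : (2 + (1 - p) * Tt - p * s * R) * (1 + Tt) - (2 + Tt)
        = -(p * s * R * (1 + Tt) - (2 - p) * Tt - (1 - p) * (Tt * Tt)) := by ring
    nlinarith [e1, hre]
  have step2 : s * ((2 + (1 - p) * Tt - p * s * R) * (1 + Tt)) < s * (2 + Tt) :=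
    mul_lt_mul_of_pos_left claimA hs0
  have step3 : (2 + Tt) * s < (2 + Tt) * t :=
    mul_lt_mul_of_pos_left hst (by linarith)
  have hring : (1 + Tt) * (s * (2 + (1 - p) * Tt - p * s * R) - t) - t
      = s * ((2 + (1 - p) * Tt - p * s * R) * (1 + Tt)) - (2 + Tt) * t := by ring
  rw [hring]
  linarith
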